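/- Given an adjoint triple of functors F ⊣ G ⊣ H (where F, H : C ⥤ D and G : D ⥤ C), the functor F is fully faithful if and only if H is fully faithful. -/

import Mathlib

open CategoryTheory

/-- Given an adjoint triple `F ⊣ G ⊣ H` (where `F H : C ⥤ D`, `G : D ⥤ C`),
the functor `F` is fully faithful if and only if `H` is fully faithful. -/
theorem adjoint_triple_full_faithful_iff
    {C : Type*} {D : Type*} [Category C] [Category D]
    (F H : C ⥤ D) (G : D ⥤ C) (adj₁ : F ⊣ G) (adj₂ : G ⊣ H) :
    (F.Full ∧ F.Faithful) ↔ (H.Full ∧ H.Faithful) := by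
  constructor
  · rintro ⟨h1, h2⟩
    have ff := (Adjunction.Triple.mk adj₁ adj₂).fullyFaithfulEquiv (Functor.FullyFaithful.ofFullyFaithful F)
    exact ⟨ff.full, ff.faithful⟩
  · rintro ⟨h1, h2⟩
    have ff := (Adjunction.Triple.mk adj₁ adj₂).fullyFaithfulEquiv.symm (Functor.FullyFaithful.ofFullyFaithful H)
    exact ⟨ff.full, ff.faithful⟩
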